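/- For all integers m, n ≥ 0 with m + n ≥ 1, one has the identity in R[Y]: m! · U(Y)^{m+n−1} · v_m^{(n)}(Y) = (−1)^m · U(Y)^{bm} · w_{m+n, bm}(Y), where ^{(n)} denotes the n-th derivative with respect to Y. (This is the identity v_m^{(n)}(Y) = ((−1)^m/m!) · U(Y)^{bm−m−n+1} · w_{m+n,bm}(Y) cleared of the possibly negative power of U.) -/

import Mathlib

open Polynomial

noncomputable section

/-- The polynomials `w_{n,λ}`: `w_{0,λ} = 1/(λ+1)` and
`w_{n,λ} = (λ−n+2)·U′·w_{n−1,λ} + U·w_{n−1,λ}′` for `n ≥ 1`. -/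
noncomputable def wpoly {R : Type*} [CommRing R] [Algebra ℚ R]
    (U : Polynomial R) : ℕ → ℕ → Polynomial R
  | 0, lam => Polynomial.C (algebraMap ℚ R (1 / ((lam : ℚ) + 1)))
  | n + 1, lam =>
      ((lam : ℤ) - n + 1) • (Polynomial.derivative U * wpoly U n lam)
        + U * Polynomial.derivative (wpoly U n lam)

/-- The polynomials `v_m`: `v_0 = U` and
`v_m = −Σ_{j=1}^{m} (U^{bj}/j!)·v_{m−j}^{(j)}` for `m ≥ 1`. -/
noncomputable def vpoly {R : Type*} [CommRing R] [Algebra ℚ R]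
    (b : ℕ) (U : Polynomial R) : ℕ → Polynomial R
  | 0 => U
  | m + 1 =>
      -∑ j ∈ Finset.range (m + 1),
        Polynomial.C (algebraMap ℚ R (1 / ((j + 1).factorial : ℚ))) * U ^ (b * (j + 1)) *
          Polynomial.derivative^[j + 1] (vpoly b U (m - j))
  decreasing_by exact Nat.lt_succ_of_le (Nat.sub_le m j)


set_option linter.unusedSectionVars false

section Helpers
variable {R : Type*} [CommRing R] [Algebra ℚ R]

theorem itD_add (p q : R[X]) (k : ℕ) :
    derivative^[k] (p + q) = derivative^[k] p + derivative^[k] q := by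
  induction k generalizing p q with
  | zero => rfl
  | succ k ih => rw [Function.iterate_succ_apply, Function.iterate_succ_apply,
      Function.iterate_succ_apply, derivative_add, ih]

theorem lemT (b : ℕ) (hb : 1 ≤ b) (U : R[X]) (i m : ℕ) (him : i < m) (g : R[X]) :
    ∑ k ∈ Finset.range (m + 1),
      ((-1 : ℤ) ^ k * (m.choose k : ℤ)) • (U ^ (b * (m - k)) * derivative^[i] (U ^ (b * k) * g))
      = 0 := by
  induction i generalizing m g with
  | zero =>
    have hm : m ≠ 0 := by omega
    have h1 : ∀ k ∈ Finset.range (m + 1),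
        ((-1 : ℤ) ^ k * (m.choose k : ℤ)) • (U ^ (b * (m - k)) * derivative^[0] (U ^ (b * k) * g))
        = ((-1 : ℤ) ^ k * (m.choose k : ℤ)) • (U ^ (b * m) * g) := by
      intro k hk
      rw [Finset.mem_range] at hk
      have : b * (m - k) + b * k = b * m := by
        rw [← Nat.mul_add, Nat.sub_add_cancel (by omega)]
      rw [Function.iterate_zero_apply, ← mul_assoc, ← pow_add, this]
    rw [Finset.sum_congr rfl h1, ← Finset.sum_smul,
      Int.alternating_sum_range_choose_of_ne hm, zero_smul]
  | succ i ih =>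
    obtain ⟨M, rfl⟩ : ∃ M, m = M + 1 := ⟨m - 1, by omega⟩
    have hsplit : ∀ k ∈ Finset.range (M + 2),
        ((-1 : ℤ) ^ k * ((M+1).choose k : ℤ)) •
          (U ^ (b * (M + 1 - k)) * derivative^[i+1] (U ^ (b * k) * g))
        = ((-1 : ℤ) ^ k * ((M+1).choose k : ℤ)) •
            (U ^ (b * (M + 1 - k)) * derivative^[i] (derivative (U ^ (b * k)) * g))
          + ((-1 : ℤ) ^ k * ((M+1).choose k : ℤ)) •
            (U ^ (b * (M + 1 - k)) * derivative^[i] (U ^ (b * k) * derivative g)) := by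
      intro k _
      rw [Function.iterate_succ_apply, derivative_mul, itD_add, mul_add, smul_add]
    rw [Finset.sum_congr rfl hsplit, Finset.sum_add_distrib]
    have h2 : ∑ k ∈ Finset.range (M + 2), ((-1 : ℤ) ^ k * ((M+1).choose k : ℤ)) •
        (U ^ (b * (M + 1 - k)) * derivative^[i] (U ^ (b * k) * derivative g)) = 0 :=
      ih (M + 1) (by omega) (derivative g)
    rw [h2, add_zero]
    -- now the A-sum
    rw [Finset.sum_range_succ']
    have h0 : ((-1 : ℤ) ^ 0 * ((M+1).choose 0 : ℤ)) •
        (U ^ (b * (M + 1 - 0)) * derivative^[i] (derivative (U ^ (b * 0)) * g)) = 0 := by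
      simp
    rw [h0, add_zero]
    set h : R[X] := U ^ (b - 1) * derivative U * g with hh
    have h3 : ∀ j ∈ Finset.range (M + 1),
        ((-1 : ℤ) ^ (j+1) * ((M+1).choose (j+1) : ℤ)) •
          (U ^ (b * (M + 1 - (j+1))) * derivative^[i] (derivative (U ^ (b * (j+1))) * g))
        = ((-b : ℤ) * (M+1)) • (((-1 : ℤ) ^ j * (M.choose j : ℤ)) •
            (U ^ (b * (M - j)) * derivative^[i] (U ^ (b * j) * h))) := by
      intro j _
      have hexp : b * (j + 1) - 1 = b * j + (b - 1) := by
        have hmul : b * (j + 1) = b * j + b := by ring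
        omega
      have hD : derivative (U ^ (b * (j+1))) * g
          = ((b * (j + 1) : ℤ)) • (U ^ (b * j) * h) := by
        rw [derivative_pow, hexp, pow_add, C_eq_natCast, hh]
        rw [zsmul_eq_mul]
        push_cast
        ring
      have hMj : M + 1 - (j + 1) = M - j := by omega
      rw [hMj, hD, iterate_derivative_smul, mul_smul_comm, smul_smul, smul_smul]
      congr 1
      have hc := congrArg (Nat.cast : ℕ → ℤ) (Nat.add_one_mul_choose_eq M j)
      push_cast at hc ⊢
      linear_combination ((-1:ℤ)^j * b) * hc
    rw [Finset.sum_congr rfl h3, ← Finset.smul_sum, ih M (by omega) h, smul_zero]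

theorem wpoly_succ (U : R[X]) (k lam : ℕ) :
    wpoly U (k+1) lam = ((lam : ℤ) - k + 1) • (derivative U * wpoly U k lam)
      + U * derivative (wpoly U k lam) := by
  rw [wpoly]

theorem wpoly_one (U : R[X]) (lam : ℕ) : wpoly U 1 lam = derivative U := by
  rw [wpoly_succ, wpoly, derivative_C, mul_zero, add_zero]
  have h1 : ((lam : ℤ) - (0:ℕ) + 1) • (derivative U * C (algebraMap ℚ R (1 / ((lam : ℚ) + 1))))
      = derivative U * C (((lam : ℤ) - (0:ℕ) + 1) • algebraMap ℚ R (1 / ((lam : ℚ) + 1))) := by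
    rw [← mul_smul_comm, smul_C]
  rw [h1]
  have h2 : ((lam : ℤ) - (0:ℕ) + 1) • algebraMap ℚ R (1 / ((lam : ℚ) + 1)) = 1 := by
    rw [← map_zsmul]
    have : ((lam : ℤ) - (0:ℕ) + 1) • (1 / ((lam : ℚ) + 1)) = 1 := by
      rw [zsmul_eq_mul]
      push_cast
      have : ((lam : ℚ) + 1) ≠ 0 := by positivity
      field_simp
      ring
    rw [this, map_one]
  rw [h2, C_1, mul_one]

theorem lemW (U : R[X]) (n lam : ℕ) :
    U ^ n * derivative^[n+1] (U ^ (lam+1)) = (lam+1) • (U ^ lam * wpoly U (n+1) lam) := by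
  induction n with
  | zero =>
    rw [pow_zero, one_mul, Function.iterate_one, derivative_pow, wpoly_one,
      Nat.add_sub_cancel, nsmul_eq_mul, C_eq_natCast]
    ring
  | succ n ih =>
    have hstar : U ^ (n+1) * derivative^[n+1] (U ^ (lam+1))
        = (lam+1) • (U ^ (lam+1) * wpoly U (n+1) lam) := by
      calc U ^ (n+1) * derivative^[n+1] (U ^ (lam+1))
          = U * (U ^ n * derivative^[n+1] (U ^ (lam+1))) := by ring
        _ = U * ((lam+1) • (U ^ lam * wpoly U (n+1) lam)) := by rw [ih]
        _ = (lam+1) • (U ^ (lam+1) * wpoly U (n+1) lam) := by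
            rw [mul_smul_comm]; ring_nf
    have hder := congrArg derivative hstar
    rw [derivative_mul, derivative_pow, derivative_smul, derivative_mul, derivative_pow,
      Nat.add_sub_cancel, Nat.add_sub_cancel] at hder
    rw [show n+1+1 = (n+1)+1 from rfl, Function.iterate_succ_apply', wpoly_succ U (n+1) lam]
    simp only [nsmul_eq_mul, zsmul_eq_mul, C_eq_natCast] at hder ih ⊢
    push_cast at hder ih ⊢
    linear_combination hder - (((n : R[X]) + 1) * derivative U) * ih

theorem vpoly_succ (b : ℕ) (U : R[X]) (m : ℕ) :
    vpoly b U (m+1) = -∑ j ∈ Finset.range (m + 1),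
        Polynomial.C (algebraMap ℚ R (1 / ((j + 1).factorial : ℚ))) * U ^ (b * (j + 1)) *
          Polynomial.derivative^[j + 1] (vpoly b U (m - j)) := by
  rw [vpoly]

theorem rat_smul_eq_C_mul (q : ℚ) (p : R[X]) : q • p = C (algebraMap ℚ R q) * p := by
  rw [← algebraMap_smul R q p, smul_eq_C_mul]

theorem iterate_derivative_pow_succ (U : R[X]) (M e : ℕ) :
    derivative^[M+1] (U ^ (e+1)) = (e+1) • derivative^[M] (U ^ e * derivative U) := by
  rw [Function.iterate_succ_apply, derivative_pow, Nat.add_sub_cancel, mul_assoc,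
    iterate_derivative_C_mul, nsmul_eq_mul, C_eq_natCast]

theorem lemV (b : ℕ) (hb : 1 ≤ b) (U : R[X]) (m : ℕ) :
    vpoly b U m
      = ((-1 : ℚ)^m / (((b*m+1) * m.factorial : ℕ) : ℚ)) • derivative^[m] (U ^ (b*m+1)) := by
  induction m using Nat.strong_induction_on with
  | _ m ih =>
  match m with
  | 0 => simp [vpoly]
  | M + 1 =>
    rw [vpoly_succ]
    have hterm : ∀ j ∈ Finset.range (M+1),
        Polynomial.C (algebraMap ℚ R (1 / ((j + 1).factorial : ℚ))) * U ^ (b * (j + 1)) *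
          Polynomial.derivative^[j + 1] (vpoly b U (M - j))
        = ((1/((M+1).factorial : ℚ)) * (((-1:ℤ)^(M-j) * ((M+1).choose (M-j) : ℤ) : ℤ) : ℚ)) •
            (U ^ (b * (j+1)) * derivative^[M] (U ^ (b * (M-j)) * derivative U)) := by
      intro j hj
      rw [Finset.mem_range] at hj
      rw [ih (M-j) (by omega), iterate_derivative_smul, ← Function.iterate_add_apply]
      have h1 : j + 1 + (M - j) = M + 1 := by omega
      rw [h1, iterate_derivative_pow_succ,
        ← Nat.cast_smul_eq_nsmul ℚ (b*(M-j)+1), smul_smul, mul_smul_comm, mul_assoc,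
        ← rat_smul_eq_C_mul, smul_smul]
      congr 1
      -- scalar identity in ℚ
      have hcf : ((M+1).choose (M-j)) * ((M-j).factorial * ((M+1) - (M-j)).factorial)
          = (M+1).factorial := by
        have := Nat.choose_mul_factorial_mul_factorial (show M - j ≤ M+1 by omega)
        rw [← this]; ring
      have h2 : (M+1) - (M-j) = j + 1 := by omega
      rw [h2] at hcf
      have hfac1 : ((j+1).factorial : ℚ) ≠ 0 := by positivity
      have hfac2 : (((M-j)).factorial : ℚ) ≠ 0 := by positivity
      have hb1 : ((b*(M-j)+1 : ℕ) : ℚ) ≠ 0 := by positivity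
      have hcfq : (((M+1).choose (M-j) : ℚ)) * ((M-j).factorial * (j+1).factorial)
          = ((M+1).factorial : ℚ) := by exact_mod_cast hcf
      have hchoose : (((M+1).choose (M-j)) : ℚ)
          = ((M+1).factorial : ℚ) / (((M-j).factorial : ℚ) * ((j+1).factorial : ℚ)) := by
        rw [eq_div_iff (by positivity)]
        exact_mod_cast hcf
      have hfacM : (((M+1).factorial : ℕ) : ℚ) ≠ 0 := by positivity
      push_cast [hchoose]
      field_simp
    rw [Finset.sum_congr rfl hterm]
    -- RHS
    rw [show b*(M+1)+1 = b*(M+1)+1 from rfl, iterate_derivative_pow_succ,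
      ← Nat.cast_smul_eq_nsmul ℚ (b*(M+1)+1), smul_smul]
    -- use lemT
    have hT := lemT b hb U M (M+1) (by omega) (derivative U)
    rw [Finset.sum_range_succ, ← Finset.sum_range_reflect] at hT
    simp only [Nat.add_sub_cancel] at hT
    have hTc : ∀ j ∈ Finset.range (M+1),
        ((-1 : ℤ) ^ (M-j) * ((M+1).choose (M-j) : ℤ)) •
          (U ^ (b * (M + 1 - (M-j))) * derivative^[M] (U ^ (b * (M-j)) * derivative U))
        = ((-1 : ℤ) ^ (M-j) * ((M+1).choose (M-j) : ℤ)) •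
          (U ^ (b * (j+1)) * derivative^[M] (U ^ (b * (M-j)) * derivative U)) := by
      intro j hj
      rw [Finset.mem_range] at hj
      have h3 : M + 1 - (M - j) = j + 1 := by omega
      rw [h3]
    rw [Finset.sum_congr rfl hTc] at hT
    -- pull the 1/(M+1)! scalar out of the sum
    have hpull : ∀ j ∈ Finset.range (M+1),
        ((1/((M+1).factorial : ℚ)) * (((-1:ℤ)^(M-j) * ((M+1).choose (M-j) : ℤ) : ℤ) : ℚ)) •
            (U ^ (b * (j+1)) * derivative^[M] (U ^ (b * (M-j)) * derivative U))
        = (1/((M+1).factorial : ℚ)) • (((-1:ℤ)^(M-j) * ((M+1).choose (M-j) : ℤ)) •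
            (U ^ (b * (j+1)) * derivative^[M] (U ^ (b * (M-j)) * derivative U))) := by
      intro j hj
      rw [← Int.cast_smul_eq_zsmul ℚ, smul_smul]
    rw [Finset.sum_congr rfl hpull, ← Finset.smul_sum]
    have hsum : ∑ j ∈ Finset.range (M+1), (((-1:ℤ)^(M-j) * ((M+1).choose (M-j) : ℤ)) •
            (U ^ (b * (j+1)) * derivative^[M] (U ^ (b * (M-j)) * derivative U)))
        = -(((-1 : ℤ) ^ (M+1) * ((M+1).choose (M+1) : ℤ)) •
            (U ^ (b * (M + 1 - (M+1))) * derivative^[M] (U ^ (b * (M+1)) * derivative U))) := by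
      exact eq_neg_of_add_eq_zero_left hT
    rw [hsum]
    simp only [Nat.sub_self, Nat.mul_zero, pow_zero, one_mul, Nat.choose_self,
      Nat.cast_one, mul_one]
    rw [smul_neg, neg_neg, ← Int.cast_smul_eq_zsmul ℚ, smul_smul]
    congr 1
    have hfacM : (((M+1).factorial : ℕ) : ℚ) ≠ 0 := by positivity
    have hbM : ((b*(M+1)+1 : ℕ) : ℚ) ≠ 0 := by positivity
    push_cast
    field_simp

end Helpers

/-- for `m, n ≥ 0` with `m + n ≥ 1`,
`m! · U^{m+n−1} · v_m^{(n)} = (−1)^m · U^{bm} · w_{m+n,bm}` in `R[Y]`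
(the identity `v_m^{(n)} = ((−1)^m/m!)·U^{bm−m−n+1}·w_{m+n,bm}` cleared of the
possibly negative power of `U`). -/
theorem factorial_mul_derivative_vpoly (R : Type*) [CommRing R] [Algebra ℚ R]
    (a b : ℕ) (ha : 2 ≤ a) (hb : 2 ≤ b)
    (u : ℕ → R) (U : Polynomial R)
    (hU : U = ∑ j ∈ Finset.range (a + 1), Polynomial.C (u j) * Polynomial.X ^ j)
    (m n : ℕ) (hmn : 1 ≤ m + n) :
    m.factorial • (U ^ (m + n - 1) * Polynomial.derivative^[n] (vpoly b U m))
      = (-1 : ℤ) ^ m • (U ^ (b * m) * wpoly U (m + n) (b * m)) := by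
  obtain ⟨s, hs⟩ : ∃ s, m + n = s + 1 := ⟨m + n - 1, by omega⟩
  have hb1 : 1 ≤ b := by omega
  rw [hs, Nat.add_sub_cancel, lemV b hb1 U m, iterate_derivative_smul,
    ← Function.iterate_add_apply]
  have hnm : n + m = s + 1 := by omega
  rw [hnm]
  rw [← Nat.cast_smul_eq_nsmul ℚ m.factorial, mul_smul_comm, smul_smul, lemW U s (b*m),
    ← Nat.cast_smul_eq_nsmul ℚ (b*m+1), smul_smul, ← Int.cast_smul_eq_zsmul ℚ]
  congr 1
  have h1 : ((m.factorial : ℕ):ℚ) ≠ 0 := by positivity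
  have h2 : ((b*m+1 : ℕ):ℚ) ≠ 0 := by positivity
  push_cast
  field_simp
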